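/- Let N be a semifinite von Neumann algebra with faithful normal semifinite trace τ. Let u ∈ N be unitary with u − 1 ∈ L¹_τ(N). Then there is a self-adjoint x ∈ L¹_τ(N) with ‖x‖ ≤ π and u = e^{ix}, and the path t ↦ e^{itx} is a continuous path (with respect to the norm ‖·‖_{1,∞} on 1 + L¹_τ(N)) from 1 to u. In particular, the group U₁(L¹_τ(N)) = {u unitary in N : u − 1 ∈ L¹_τ(N)} is path connected in the ‖·‖_{1,∞}-topology. -/

import Mathlib

set_option synthInstance.maxHeartbeats 1000000
set_option maxHeartbeats 1000000

open scoped ENNReal NNReal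

variable {H : Type} [NormedAddCommGroup H] [InnerProductSpace ℂ H] [CompleteSpace H]

/-- The absolute value `|x| = (x*x)^{1/2}` of a bounded operator, via the
continuous functional calculus. -/
noncomputable def absOp (x : H →L[ℂ] H) : H →L[ℂ] H := CFC.sqrt (star x * x)

/-- `τ : N₊ → [0,∞]` is a faithful normal semifinite trace on the von Neumann algebra `N`.
The function `τ` is defined on all operators but its properties only concern positive
elements of `N`. -/
structure IsFNSTrace (N : VonNeumannAlgebra H) (τ : (H →L[ℂ] H) → ℝ≥0∞) : Prop where
  map_zero : τ 0 = 0
  additive : ∀ x y : H →L[ℂ] H, x ∈ N → y ∈ N → 0 ≤ x → 0 ≤ y → τ (x + y) = τ x + τ y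
  homogeneous : ∀ (c : ℝ≥0) (x : H →L[ℂ] H), x ∈ N → 0 ≤ x → τ (c • x) = c * τ x
  tracial : ∀ x : H →L[ℂ] H, x ∈ N → τ (star x * x) = τ (x * star x)
  faithful : ∀ x : H →L[ℂ] H, x ∈ N → 0 ≤ x → τ x = 0 → x = 0
  monotone : ∀ x y : H →L[ℂ] H, x ∈ N → y ∈ N → 0 ≤ x → x ≤ y → τ x ≤ τ y
  normal : ∀ (ι : Type) (_ : Preorder ι) (f : ι → (H →L[ℂ] H)) (x : H →L[ℂ] H),
      (∀ i, f i ∈ N) → (∀ i, 0 ≤ f i) → Monotone f → IsLUB (Set.range f) x →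
      τ x = ⨆ i, τ (f i)
  semifinite : ∀ x : H →L[ℂ] H, x ∈ N → 0 ≤ x → x ≠ 0 →
      ∃ y : H →L[ℂ] H, y ∈ N ∧ 0 ≤ y ∧ y ≤ x ∧ y ≠ 0 ∧ τ y < ∞

/-- Membership in the trace ideal `L¹_τ(N) = {x ∈ N : τ(|x|) < ∞}`. -/
def MemL1 (N : VonNeumannAlgebra H) (τ : (H →L[ℂ] H) → ℝ≥0∞) (x : H →L[ℂ] H) : Prop :=
  x ∈ N ∧ τ (absOp x) < ∞

/-- The norm `‖x‖_{1,∞} = ‖x‖ + τ(|x|)` on the trace ideal. -/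
noncomputable def normL1 (τ : (H →L[ℂ] H) → ℝ≥0∞) (x : H →L[ℂ] H) : ℝ :=
  ‖x‖ + (τ (absOp x)).toReal


open scoped Real
open Complex
noncomputable section


/-- clamp-based step function: equals 1 for `c ≤ a`, 0 for `c ≥ b` (when `a < b`). -/
def stp (a b c : ℝ) : ℝ := max 0 (min 1 ((b - c) / (b - a)))

lemma stp_nonneg (a b c : ℝ) : 0 ≤ stp a b c := le_max_left _ _

lemma stp_le_one (a b c : ℝ) : stp a b c ≤ 1 :=
  max_le zero_le_one (min_le_left _ _)

lemma stp_eq_one {a b c : ℝ} (hab : a < b) (hc : c ≤ a) : stp a b c = 1 := by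
  have h1 : (1:ℝ) ≤ (b - c) / (b - a) := by
    rw [le_div_iff₀ (by linarith)]; linarith
  simp [stp, min_eq_left h1]

lemma stp_eq_zero {a b c : ℝ} (hab : a < b) (hc : b ≤ c) : stp a b c = 0 := by
  have h1 : (b - c) / (b - a) ≤ 0 :=
    div_nonpos_of_nonpos_of_nonneg (by linarith) (by linarith)
  have h2 : min 1 ((b - c)/(b - a)) ≤ 0 := le_trans (min_le_right _ _) h1
  simp [stp, max_eq_left h2]

lemma continuous_stp (a b : ℝ) : Continuous (stp a b) := by
  unfold stp
  fun_prop

/-- The geometric scale sequence. -/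
def tt (n : ℕ) : ℝ := π * (4:ℝ)⁻¹ ^ (n + 2)

lemma tt_pos (n : ℕ) : 0 < tt n :=
  mul_pos Real.pi_pos (pow_pos (by norm_num) _)

lemma tt_anti {n m : ℕ} (h : n ≤ m) : tt m ≤ tt n := by
  unfold tt
  exact mul_le_mul_of_nonneg_left
    (pow_le_pow_of_le_one (by norm_num) (by norm_num) (by omega)) Real.pi_pos.le

lemma tt_succ (n : ℕ) : tt (n + 1) = tt n / 4 := by
  unfold tt
  rw [show n + 1 + 2 = (n + 2) + 1 by omega, pow_succ]
  ring

lemma tt16 (n : ℕ) : 16 * tt n ≤ π := by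
  have h : tt n ≤ tt 0 := tt_anti (Nat.zero_le n)
  have : tt 0 = π / 16 := by unfold tt; ring
  nlinarith [Real.pi_pos]

lemma tt_le_pi (n : ℕ) : tt n ≤ π := by nlinarith [tt16 n, tt_pos n, Real.pi_pos]

/-- comparison of cosine offsets: `0 < s ≤ s' ≤ π` gives `cos (π - s) ≤ cos (π - s')`. -/
lemma cos_off_le {s s' : ℝ} (hs : 0 < s) (hss' : s ≤ s') (hs' : s' ≤ π) :
    Real.cos (π - s) ≤ Real.cos (π - s') := by
  rcases eq_or_lt_of_le hss' with rfl | h2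
  · exact le_refl _
  · exact le_of_lt (Real.strictAntiOn_cos (Set.mem_Icc.mpr ⟨by linarith, by linarith⟩)
      (Set.mem_Icc.mpr ⟨by linarith, by linarith⟩) (by linarith))

lemma neg_one_lt_cos_off {s : ℝ} (hs : 0 < s) (hs' : s ≤ π) :
    -1 < Real.cos (π - s) := by
  have h := Real.strictAntiOn_cos (Set.mem_Icc.mpr ⟨by linarith, by linarith⟩)
    (Set.mem_Icc.mpr ⟨Real.pi_pos.le, le_refl π⟩) (show π - s < π by linarith)
  simpa [Real.cos_pi] using h

/-- the outer bump family (majorants): 1 for `c ≤ cos (π - 8 t n)`, 0 for `c ≥ cos (π - 16 t n)`. -/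
def Kf (n : ℕ) (c : ℝ) : ℝ := stp (Real.cos (π - 8 * tt n)) (Real.cos (π - 16 * tt n)) c

/-- the inner bump: 1 for `c ≤ cos (π - t n)`, 0 for `c ≥ cos (π - 2 t n)`. -/
def κf (n : ℕ) (c : ℝ) : ℝ := stp (Real.cos (π - tt n)) (Real.cos (π - 2 * tt n)) c

/-- transition to the identity: 0 for `c ≤ cos (π - 4 t n)`, 1 for `c ≥ cos (π - 8 t n)`. -/
def ρf (n : ℕ) (c : ℝ) : ℝ := 1 - stp (Real.cos (π - 4 * tt n)) (Real.cos (π - 8 * tt n)) c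

/-- approximants of the branch-cut logarithm. -/
def hf (n : ℕ) (z : ℂ) : ℝ := Complex.arg z * ρf n z.re + π * κf n z.re

lemma cos_lt_cos_off {s s' : ℝ} (hs : 0 < s) (hss' : s < s') (hs' : s' ≤ π) :
    Real.cos (π - s) < Real.cos (π - s') :=
  Real.strictAntiOn_cos ⟨by linarith, by linarith⟩ ⟨by linarith, by linarith⟩ (by linarith)

lemma Kf_one {n : ℕ} {c : ℝ} (hc : c ≤ Real.cos (π - 8 * tt n)) : Kf n c = 1 :=
  stp_eq_one (cos_lt_cos_off (by nlinarith [tt_pos n]) (by nlinarith [tt_pos n]) (tt16 n)) hc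

lemma Kf_zero {n : ℕ} {c : ℝ} (hc : Real.cos (π - 16 * tt n) ≤ c) : Kf n c = 0 :=
  stp_eq_zero (cos_lt_cos_off (by nlinarith [tt_pos n]) (by nlinarith [tt_pos n]) (tt16 n)) hc

lemma κf_one {n : ℕ} {c : ℝ} (hc : c ≤ Real.cos (π - tt n)) : κf n c = 1 :=
  stp_eq_one (cos_lt_cos_off (tt_pos n) (by nlinarith [tt_pos n]) (by nlinarith [tt16 n, tt_pos n])) hc

lemma κf_zero {n : ℕ} {c : ℝ} (hc : Real.cos (π - 2 * tt n) ≤ c) : κf n c = 0 :=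
  stp_eq_zero (cos_lt_cos_off (tt_pos n) (by nlinarith [tt_pos n]) (by nlinarith [tt16 n, tt_pos n])) hc

lemma ρf_zero {n : ℕ} {c : ℝ} (hc : c ≤ Real.cos (π - 4 * tt n)) : ρf n c = 0 := by
  unfold ρf
  rw [stp_eq_one (cos_lt_cos_off (by nlinarith [tt_pos n]) (by nlinarith [tt_pos n])
    (by nlinarith [tt16 n, tt_pos n])) hc]
  ring

lemma ρf_one {n : ℕ} {c : ℝ} (hc : Real.cos (π - 8 * tt n) ≤ c) : ρf n c = 1 := by
  unfold ρf
  rw [stp_eq_zero (cos_lt_cos_off (by nlinarith [tt_pos n]) (by nlinarith [tt_pos n])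
    (by nlinarith [tt16 n, tt_pos n])) hc]
  ring

lemma ρf_mem {n : ℕ} (c : ℝ) : 0 ≤ ρf n c ∧ ρf n c ≤ 1 := by
  unfold ρf
  constructor
  · linarith [stp_le_one (Real.cos (π - 4 * tt n)) (Real.cos (π - 8 * tt n)) c]
  · linarith [stp_nonneg (Real.cos (π - 4 * tt n)) (Real.cos (π - 8 * tt n)) c]

lemma Kf_mem {n : ℕ} (c : ℝ) : 0 ≤ Kf n c ∧ Kf n c ≤ 1 := ⟨stp_nonneg _ _ _, stp_le_one _ _ _⟩

lemma κf_mem {n : ℕ} (c : ℝ) : 0 ≤ κf n c ∧ κf n c ≤ 1 := ⟨stp_nonneg _ _ _, stp_le_one _ _ _⟩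

/-- `Kf` is antitone in the index. -/
lemma Kf_anti {n m : ℕ} (h : n ≤ m) (c : ℝ) : Kf m c ≤ Kf n c := by
  rcases eq_or_lt_of_le h with rfl | hlt
  · exact le_refl _
  · by_cases hc : c ≤ Real.cos (π - 8 * tt n)
    · rw [Kf_one hc]; exact (Kf_mem c).2
    · push_neg at hc
      have h16 : 16 * tt m ≤ 8 * tt n := by
        have h1 : tt m ≤ tt (n+1) := tt_anti hlt
        have h2 : tt (n+1) = tt n / 4 := tt_succ n
        nlinarith [tt_pos n]
      have : Real.cos (π - 16 * tt m) ≤ Real.cos (π - 8 * tt n) :=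
        cos_off_le (by nlinarith [tt_pos m]) h16 (by nlinarith [tt16 n, tt_pos n])
      rw [Kf_zero (le_of_lt (lt_of_le_of_lt this hc))]
      exact (Kf_mem c).1

lemma two_sub_two_cos (t : ℝ) : 2 - 2 * Real.cos t = 4 * Real.sin (t/2)^2 := by
  have h1 := Real.cos_two_mul (t/2)
  have h2 := Real.sin_sq_add_cos_sq (t/2)
  have h3 : 2 * (t/2) = t := by ring
  rw [h3] at h1
  nlinarith

lemma one_sub_cos_le (t : ℝ) : 1 - Real.cos t ≤ t^2/2 := by
  have h1 := two_sub_two_cos t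
  have h2 := Real.sin_sq_le_sq (x := t/2)
  nlinarith

/-- `|e^{it} - 1| = 2|sin(t/2)|`. -/
lemma abs_exp_I_sub_one (t : ℝ) : ‖Complex.exp (I * t) - 1‖ = 2 * |Real.sin (t/2)| := by
  have h0 : Complex.exp (I * t) - 1 = ((Real.cos t - 1 : ℝ) : ℂ) + (Real.sin t : ℝ) * I := by
    rw [mul_comm, Complex.exp_mul_I, ← Complex.ofReal_cos, ← Complex.ofReal_sin]
    push_cast
    ring
  have h1 : Complex.normSq (Complex.exp (I * t) - 1) = (2 * |Real.sin (t/2)|)^2 := by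
    rw [h0, Complex.normSq_add_mul_I]
    have h2 := two_sub_two_cos t
    have h3 : |Real.sin (t/2)|^2 = Real.sin (t/2)^2 := sq_abs _
    have h4 := Real.sin_sq_add_cos_sq t
    nlinarith
  rw [Complex.norm_def, h1, Real.sqrt_sq (by positivity)]

lemma abs_exp_I_mul_real (t : ℝ) : ‖Complex.exp (I * t)‖ = 1 := by
  rw [Complex.norm_exp]
  simp

/-- `|e^{ia} - e^{ib}| = 2|sin((a-b)/2)|`. -/
lemma abs_exp_I_sub_exp_I (a b : ℝ) :
    ‖Complex.exp (I * a) - Complex.exp (I * b)‖ = 2 * |Real.sin ((a - b)/2)| := by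
  have h0 : Complex.exp (I * a) - Complex.exp (I * b)
      = Complex.exp (I * b) * (Complex.exp (I * (a - b : ℝ)) - 1) := by
    rw [mul_sub, ← Complex.exp_add, mul_one]
    push_cast
    ring_nf
  rw [h0, norm_mul, abs_exp_I_mul_real, one_mul, abs_exp_I_sub_one]

lemma abs_exp_I_sub_one_le {t : ℝ} : ‖Complex.exp (I * t) - 1‖ ≤ |t| := by
  rw [abs_exp_I_sub_one]
  calc 2 * |Real.sin (t/2)| ≤ 2 * |t/2| := by
        have := Real.abs_sin_le_abs (x := t/2); linarith
    _ = |t| := by rw [abs_div]; norm_num; ring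

lemma exp_I_arg {z : ℂ} (hz : ‖z‖ = 1) : Complex.exp (I * Complex.arg z) = z := by
  have := Complex.norm_mul_exp_arg_mul_I z
  rw [hz] at this
  rw [mul_comm]
  simpa using this

lemma sq_re_add_im {z : ℂ} (hz : ‖z‖ = 1) : z.re^2 + z.im^2 = 1 := by
  have h := Complex.sq_norm z
  rw [hz] at h
  rw [Complex.normSq_apply] at h
  nlinarith

/-- `E1`: the approximants are bounded by `π`. -/
lemma hf_abs_le (n : ℕ) (z : ℂ) : |hf n z| ≤ π := by
  have harg := Complex.abs_arg_le_pi z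
  have hρ := ρf_mem (n := n) z.re
  have hκ := κf_mem (n := n) z.re
  have hπ := Real.pi_pos
  by_cases hc : z.re ≤ Real.cos (π - 4 * tt n)
  · rw [hf, ρf_zero hc]
    rw [abs_le]
    constructor <;> nlinarith
  · push_neg at hc
    have h2 : Real.cos (π - 2 * tt n) ≤ Real.cos (π - 4 * tt n) :=
      cos_off_le (by nlinarith [tt_pos n]) (by nlinarith [tt_pos n]) (by nlinarith [tt16 n, tt_pos n])
    rw [hf, κf_zero (le_trans h2 hc.le)]
    rw [abs_le]
    have h3 := abs_le.mp harg
    constructor <;> nlinarith [h3.1, h3.2]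

lemma Kf_diff_nonneg {n m : ℕ} (h : n ≤ m) (c : ℝ) : 0 ≤ Kf n c - Kf m c :=
  sub_nonneg.mpr (Kf_anti h c)

lemma tt_plus_two (n : ℕ) : 16 * tt (n + 2) = tt n := by
  rw [tt_succ, tt_succ]; ring

/-- `E2`: Cauchy estimate for the approximants. -/
lemma hf_sub_sq_le {n m : ℕ} (h : n ≤ m) {z : ℂ} (hz : ‖z‖ = 1) :
    (hf n z - hf m z)^2 ≤ 4 * π^2 * (Kf n z.re - Kf (m+2) z.re) := by
  have hπ := Real.pi_pos
  have htn := tt_pos n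
  have htm := tt_pos m
  have httm := tt_anti h
  by_cases h1 : Real.cos (π - 8 * tt n) ≤ z.re
  · have hρn : ρf n z.re = 1 := ρf_one h1
    have hκn : κf n z.re = 0 := κf_zero (le_trans (cos_off_le (by nlinarith) (by nlinarith)
      (by nlinarith [tt16 n])) h1)
    have hρm : ρf m z.re = 1 := ρf_one (le_trans (cos_off_le (by nlinarith) (by nlinarith)
      (by nlinarith [tt16 n])) h1)
    have hκm : κf m z.re = 0 := κf_zero (le_trans (cos_off_le (by nlinarith) (by nlinarith)
      (by nlinarith [tt16 n])) h1)
    rw [hf, hf, hρn, hκn, hρm, hκm]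
    have hK := Kf_diff_nonneg (show n ≤ m + 2 by omega) z.re
    nlinarith
  · push_neg at h1
    by_cases h2 : z.re ≤ Real.cos (π - tt m)
    · have hc1 : z.re ≤ Real.cos (π - tt n) := le_trans h2 (cos_off_le (by nlinarith) (by nlinarith)
        (by nlinarith [tt16 n]))
      have hρn : ρf n z.re = 0 := ρf_zero (le_trans hc1 (cos_off_le (by nlinarith) (by nlinarith)
        (by nlinarith [tt16 n])))
      have hρm : ρf m z.re = 0 := ρf_zero (le_trans h2 (cos_off_le (by nlinarith) (by nlinarith)
        (by nlinarith [tt16 m])))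
      have hκn : κf n z.re = 1 := κf_one hc1
      have hκm : κf m z.re = 1 := κf_one h2
      rw [hf, hf, hρn, hκn, hρm, hκm]
      have hK := Kf_diff_nonneg (show n ≤ m + 2 by omega) z.re
      nlinarith
    · push_neg at h2
      have hKn : Kf n z.re = 1 := Kf_one h1.le
      have hKm : Kf (m+2) z.re = 0 := by
        apply Kf_zero
        rw [tt_plus_two]
        exact h2.le
      rw [hKn, hKm]
      have e1 := hf_abs_le n z
      have e2 := hf_abs_le m z
      rw [abs_le] at e1 e2
      nlinarith [e1.1, e1.2, e2.1, e2.2]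

/-- `E3`: the exponential of the approximant is close to `z`. -/
lemma exp_hf_sub_sq_le (n : ℕ) {z : ℂ} (hz : ‖z‖ = 1) :
    (‖Complex.exp (I * hf n z) - z‖)^2
      ≤ 4 * (Kf n z.re - Kf (n+2) z.re) + tt n^2 := by
  have hπ := Real.pi_pos
  have htn := tt_pos n
  have hK := Kf_diff_nonneg (show n ≤ n + 2 by omega) z.re
  by_cases h1 : Real.cos (π - 8 * tt n) ≤ z.re
  · have hρn : ρf n z.re = 1 := ρf_one h1
    have hκn : κf n z.re = 0 := κf_zero (le_trans (cos_off_le (by nlinarith) (by nlinarith)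
      (by nlinarith [tt16 n])) h1)
    have hhf : hf n z = Complex.arg z := by rw [hf, hρn, hκn]; ring
    rw [hhf, exp_I_arg hz]
    simp only [sub_self, map_zero, norm_zero]
    nlinarith [sq_nonneg (tt n)]
  · push_neg at h1
    by_cases h2 : z.re ≤ Real.cos (π - tt n)
    · have hρn : ρf n z.re = 0 := ρf_zero (le_trans h2 (cos_off_le (by nlinarith) (by nlinarith)
        (by nlinarith [tt16 n])))
      have hκn : κf n z.re = 1 := κf_one h2
      have hhf : hf n z = π := by rw [hf, hρn, hκn]; ring
      rw [hhf]
      have hexp : Complex.exp (I * (π:ℝ)) = -1 := by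
        rw [mul_comm]; exact_mod_cast Complex.exp_pi_mul_I
      rw [hexp]
      have habs : (‖-1 - z‖)^2 = 2 + 2*z.re := by
        rw [Complex.sq_norm, Complex.normSq_apply]
        have h5 := sq_re_add_im hz
        simp only [Complex.sub_re, Complex.sub_im, Complex.neg_re, Complex.neg_im,
          Complex.one_re, Complex.one_im]
        nlinarith
      rw [habs]
      have hb : 2 + 2*z.re ≤ 2 - 2 * Real.cos (tt n) := by
        have h6 : Real.cos (π - tt n) = - Real.cos (tt n) := Real.cos_pi_sub _
        nlinarith
      have h7 := one_sub_cos_le (tt n)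
      nlinarith
    · push_neg at h2
      have hKn : Kf n z.re = 1 := Kf_one h1.le
      have hKm : Kf (n+2) z.re = 0 := by
        apply Kf_zero; rw [tt_plus_two]; exact h2.le
      rw [hKn, hKm]
      have hb : ‖Complex.exp (I * hf n z) - z‖ ≤ 2 := by
        calc ‖Complex.exp (I * hf n z) - z‖
            ≤ ‖Complex.exp (I * hf n z)‖ + ‖z‖ := by
              simpa using norm_sub_le (Complex.exp (I * hf n z)) z
          _ = 2 := by rw [abs_exp_I_mul_real, hz]; norm_num
      nlinarith [norm_nonneg (Complex.exp (I * hf n z) - z)]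

/-- Continuity of the (coerced) approximants on the unit circle. -/
lemma hf_continuousOn (n : ℕ) :
    ContinuousOn (fun z => (hf n z : ℂ)) {z : ℂ | ‖z‖ = 1} := by
  have hρcont : Continuous (fun z : ℂ => ρf n z.re) := by
    unfold ρf
    exact (continuous_const.sub ((continuous_stp _ _).comp continuous_re))
  have hκcont : Continuous (fun z : ℂ => κf n z.re) := by
    unfold κf
    exact (continuous_stp _ _).comp continuous_re
  intro z₀ hz₀
  by_cases hsp : z₀ ∈ Complex.slitPlane
  · have h1 : ContinuousAt (fun z : ℂ => hf n z) z₀ := by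
      unfold hf
      exact ((Complex.continuousAt_arg hsp).mul hρcont.continuousAt).add
        (continuousAt_const.mul hκcont.continuousAt)
    exact (Complex.continuous_ofReal.continuousAt.comp h1).continuousWithinAt
  · rw [Complex.mem_slitPlane_iff] at hsp
    push_neg at hsp
    have hre : z₀.re ≤ 0 := hsp.1
    have him : z₀.im = 0 := hsp.2
    have hz1 : z₀.re^2 + z₀.im^2 = 1 := sq_re_add_im hz₀
    have hre1 : z₀.re = -1 := by
      have h0 : (z₀.re + 1) * (z₀.re - 1) = 0 := by nlinarith
      rcases mul_eq_zero.mp h0 with h | h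
      · linarith
      · nlinarith
    have hz₀e : z₀ = -1 := by
      apply Complex.ext <;> simp [hre1, him]
    subst hz₀e
    have hr : (0:ℝ) < 1 + Real.cos (π - 4 * tt n) := by
      have := neg_one_lt_cos_off (s := 4 * tt n) (by nlinarith [tt_pos n])
        (by nlinarith [tt16 n, tt_pos n])
      linarith
    have hev : (fun z : ℂ => (hf n z : ℂ)) =ᶠ[nhds (-1)]
        (fun w : ℂ => ((π * κf n w.re : ℝ) : ℂ)) := by
      filter_upwards [Metric.ball_mem_nhds (-1 : ℂ) hr] with w hw
      have h2 : w.re ≤ Real.cos (π - 4 * tt n) := by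
        have h3 : ‖w + 1‖ < 1 + Real.cos (π - 4 * tt n) := by
          rw [Metric.mem_ball, Complex.dist_eq, sub_neg_eq_add] at hw
          exact hw
        have h4 : (w + 1).re ≤ ‖w + 1‖ := Complex.re_le_norm _
        simp only [Complex.add_re, Complex.one_re] at h4
        linarith
      rw [hf, ρf_zero h2]
      norm_num
    have hcont : ContinuousAt (fun w : ℂ => ((π * κf n w.re : ℝ) : ℂ)) (-1) :=
      (Complex.continuous_ofReal.comp (continuous_const.mul hκcont)).continuousAt
    exact (hcont.congr hev.symm).continuousWithinAt

section OpTools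

variable {H : Type} [NormedAddCommGroup H] [InnerProductSpace ℂ H] [CompleteSpace H]

lemma centralizer_isClosed (S : Set (H →L[ℂ] H)) : IsClosed (Set.centralizer S) := by
  have h : Set.centralizer S = ⋂ y ∈ S, {z : H →L[ℂ] H | y * z = z * y} := by
    ext z
    simp [Set.mem_centralizer_iff, Set.mem_iInter]
  rw [h]
  exact isClosed_biInter fun y _ =>
    isClosed_eq (continuous_const.mul continuous_id) (continuous_id.mul continuous_const)

lemma vN_isClosed (N : VonNeumannAlgebra H) : IsClosed (N : Set (H →L[ℂ] H)) := by
  rw [← N.centralizer_centralizer]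
  exact centralizer_isClosed _

lemma cfcHom_mem_vN (N : VonNeumannAlgebra H) {a : H →L[ℂ] H} (haN : a ∈ N)
    (ha : IsStarNormal a) (g : C(spectrum ℂ a, ℂ)) : cfcHom ha g ∈ N := by
  induction g using ContinuousMap.induction_on_of_compact with
  | const r =>
    have h1 : (ContinuousMap.const (spectrum ℂ a) r) = algebraMap ℂ C(spectrum ℂ a, ℂ) r := rfl
    rw [h1, AlgHomClass.commutes]
    exact N.toStarSubalgebra.algebraMap_mem r
  | id => rw [cfcHom_id ha]; exact haN
  | star_id => rw [map_star, cfcHom_id ha]; exact star_mem haN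
  | add f g hf hg => rw [map_add]; exact add_mem hf hg
  | mul f g hf hg => rw [map_mul]; exact mul_mem hf hg
  | frequently f h =>
    have hcl : IsClosed {g : C(spectrum ℂ a, ℂ) | cfcHom ha g ∈ N} :=
      (vN_isClosed N).preimage (cfcHom_isClosedEmbedding (R := ℂ) ha).continuous
    exact hcl.closure_subset (mem_closure_iff_frequently.mpr h)

lemma cfc_mem_vN (N : VonNeumannAlgebra H) {a : H →L[ℂ] H} (haN : a ∈ N) (f : ℂ → ℂ) :
    cfc f a ∈ N := by
  by_cases ha : IsStarNormal a
  · by_cases hf : ContinuousOn f (spectrum ℂ a)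
    · rw [cfc_apply f a ha hf]
      exact cfcHom_mem_vN N haN ha _
    · rw [cfc_apply_of_not_continuousOn a hf]
      exact zero_mem N.toStarSubalgebra
  · rw [cfc_apply_of_not_predicate a ha]
    exact zero_mem N.toStarSubalgebra

lemma cfc_ofReal_nonneg {a : H →L[ℂ] H} (ha : IsStarNormal a) {g : ℂ → ℝ}
    (hg : ContinuousOn (fun z => (g z : ℂ)) (spectrum ℂ a))
    (h0 : ∀ z ∈ spectrum ℂ a, 0 ≤ g z) :
    0 ≤ cfc (fun z => (g z : ℂ)) a := by
  have hgr : ContinuousOn g (spectrum ℂ a) := by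
    have h2 : g = fun z => ((g z : ℂ)).re := by funext z; simp
    rw [h2]
    exact Complex.continuous_re.comp_continuousOn hg
  have hs : ContinuousOn (fun z => (Real.sqrt (g z) : ℂ)) (spectrum ℂ a) :=
    Complex.continuous_ofReal.comp_continuousOn (Real.continuous_sqrt.comp_continuousOn hgr)
  have h1 : cfc (fun z => (g z : ℂ)) a
      = cfc (fun z => star ((Real.sqrt (g z) : ℂ)) * (Real.sqrt (g z) : ℂ)) a := by
    apply cfc_congr
    intro z hz
    simp only [Complex.star_def, Complex.conj_ofReal]
    rw [← Complex.ofReal_mul, Real.mul_self_sqrt (h0 z hz)]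
  rw [h1, cfc_mul _ _ a hs.star hs, cfc_star]
  exact star_mul_self_nonneg _

lemma cfc_ofReal_mono {a : H →L[ℂ] H} (ha : IsStarNormal a) {g₁ g₂ : ℂ → ℝ}
    (h1 : ContinuousOn (fun z => (g₁ z : ℂ)) (spectrum ℂ a))
    (h2 : ContinuousOn (fun z => (g₂ z : ℂ)) (spectrum ℂ a))
    (h : ∀ z ∈ spectrum ℂ a, g₁ z ≤ g₂ z) :
    cfc (fun z => (g₁ z : ℂ)) a ≤ cfc (fun z => (g₂ z : ℂ)) a := by
  have h3 : ContinuousOn (fun z => ((g₂ z - g₁ z : ℝ) : ℂ)) (spectrum ℂ a) := by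
    have : (fun z => ((g₂ z - g₁ z : ℝ) : ℂ)) = fun z => (g₂ z : ℂ) - (g₁ z : ℂ) := by
      funext z; push_cast; ring
    rw [this]
    exact h2.sub h1
  have h4 := cfc_ofReal_nonneg ha h3 (fun z hz => sub_nonneg.mpr (h z hz))
  have h5 : (fun z => ((g₂ z - g₁ z : ℝ) : ℂ)) = fun z => (g₂ z : ℂ) - (g₁ z : ℂ) := by
    funext z; push_cast; ring
  rw [h5, cfc_sub _ _ a h2 h1] at h4
  exact sub_nonneg.mp h4

lemma re_inner_le {T S : H →L[ℂ] H} (h : T ≤ S) (ξ : H) :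
    RCLike.re (inner ℂ (T ξ) ξ : ℂ) ≤ RCLike.re (inner ℂ (S ξ) ξ : ℂ) := by
  have h2 := ((ContinuousLinearMap.le_def T S).mp h).re_inner_nonneg_left ξ
  simp only [ContinuousLinearMap.sub_apply, inner_sub_left, map_sub] at h2
  linarith

lemma re_inner_nonneg {T : H →L[ℂ] H} (h : 0 ≤ T) (ξ : H) :
    0 ≤ RCLike.re (inner ℂ (T ξ) ξ : ℂ) :=
  ((ContinuousLinearMap.nonneg_iff_isPositive T).mp h).re_inner_nonneg_left ξ

lemma norm_cfc_apply_sq {a : H →L[ℂ] H} (ha : IsStarNormal a) {f : ℂ → ℂ}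
    (hf : ContinuousOn f (spectrum ℂ a)) (ξ : H) :
    ‖cfc f a ξ‖^2
      = RCLike.re (inner ℂ ((cfc (fun z => ((‖f z‖^2 : ℝ) : ℂ)) a) ξ) ξ : ℂ) := by
  have h1 : cfc (fun z => ((‖f z‖^2 : ℝ) : ℂ)) a = star (cfc f a) * cfc f a := by
    rw [← cfc_star f a, ← cfc_mul _ _ a hf.star hf]
    apply cfc_congr
    intro z hz
    show ((‖f z‖^2 : ℝ) : ℂ) = star (f z) * f z
    rw [show ((‖f z‖^2 : ℝ) : ℂ) = ((Complex.normSq (f z) : ℝ) : ℂ) by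
      rw [Complex.sq_norm], Complex.normSq_eq_conj_mul_self]
    rfl
  rw [h1]
  have h2 : (star (cfc f a) * cfc f a) ξ
      = ContinuousLinearMap.adjoint (cfc f a) (cfc f a ξ) := rfl
  rw [h2, ContinuousLinearMap.adjoint_inner_left, inner_self_eq_norm_sq]

lemma isStarNormal_I_smul {T : H →L[ℂ] H} (hT : IsSelfAdjoint T) : IsStarNormal (I • T) := by
  constructor
  rw [Commute, SemiconjBy, star_smul, hT.star_eq]
  rw [smul_mul_smul_comm, smul_mul_smul_comm, mul_comm (star I) I]

lemma expI_cfc {T : H →L[ℂ] H} (hT : IsSelfAdjoint T) :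
    cfc (fun z => Complex.exp (I * z)) T = NormedSpace.exp (I • T) := by
  have hT' : IsStarNormal T := hT.isStarNormal
  have h0 : cfc (fun z => Complex.exp (I * z)) T = cfc (Complex.exp <| I * ·) T := rfl
  rw [h0, cfc_comp' Complex.exp (fun z => I * z) T
    (Complex.continuous_exp.continuousOn) ((continuous_const.mul continuous_id).continuousOn)]
  have h1 : cfc (fun z : ℂ => I * z) T = I • T := by
    have : (fun z : ℂ => I * z) = fun z : ℂ => I • z := by funext z; simp [smul_eq_mul]
    rw [this, cfc_smul_id I T]
  rw [h1]
  exact CFC.complex_exp_eq_normedSpace_exp (isStarNormal_I_smul hT)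

lemma exp_I_smul_star_mul_self {T : H →L[ℂ] H} (hT : IsSelfAdjoint T) :
    star (NormedSpace.exp (I • T)) * NormedSpace.exp (I • T) = 1 := by
  rw [NormedSpace.star_exp, star_smul, hT.star_eq]
  letI : NormedAlgebra ℚ (H →L[ℂ] H) := NormedAlgebra.restrictScalars ℚ ℂ _
  rw [← NormedSpace.exp_add_of_commute (((Commute.refl T).smul_left (star I)).smul_right I)]
  have h1 : star I • T + I • T = (0 : H →L[ℂ] H) := by
    rw [← add_smul]
    simp [Complex.star_def, Complex.conj_I]
  rw [h1, NormedSpace.exp_zero]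

lemma norm_exp_I_smul_le [Nontrivial H] {T : H →L[ℂ] H} (hT : IsSelfAdjoint T) :
    ‖NormedSpace.exp (I • T)‖ ≤ 1 := by
  haveI : NormOneClass (H →L[ℂ] H) := ⟨ContinuousLinearMap.norm_id⟩
  have h2 : ‖NormedSpace.exp (I • T)‖ * ‖NormedSpace.exp (I • T)‖ = 1 := by
    rw [← CStarRing.norm_star_mul_self, exp_I_smul_star_mul_self hT, norm_one]
  nlinarith [norm_nonneg (NormedSpace.exp (I • T))]

lemma exp_diff_apply_le [Nontrivial H] {T S : H →L[ℂ] H} (hT : IsSelfAdjoint T)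
    (hS : IsSelfAdjoint S) (hc : Commute T S) (ξ : H) :
    ‖(NormedSpace.exp (I • T) - NormedSpace.exp (I • S)) ξ‖ ≤ ‖(T - S) ξ‖ := by
  set D := T - S with hDdef
  have hD : IsSelfAdjoint D := hT.sub hS
  have hDn : IsStarNormal D := hD.isStarNormal
  have hcomm : Commute (I • S) (I • D) := by
    apply Commute.smul_left
    apply Commute.smul_right
    exact (hc.symm).sub_right (Commute.refl S)
  have hsplit : NormedSpace.exp (I • T) = NormedSpace.exp (I • S) * NormedSpace.exp (I • D) := by
    have hSD : S + D = T := by rw [hDdef]; abel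
    letI : NormedAlgebra ℚ (H →L[ℂ] H) := NormedAlgebra.restrictScalars ℚ ℂ _
    rw [← NormedSpace.exp_add_of_commute hcomm, ← smul_add, hSD]
  have h2 : NormedSpace.exp (I • T) - NormedSpace.exp (I • S)
      = NormedSpace.exp (I • S) * (NormedSpace.exp (I • D) - 1) := by
    rw [mul_sub, mul_one, ← hsplit]
  rw [h2]
  have key : ‖(NormedSpace.exp (I • D) - 1) ξ‖^2 ≤ ‖D ξ‖^2 := by
    have e1 : NormedSpace.exp (I • D) - 1 = cfc (fun z => Complex.exp (I * z) - 1) D := by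
      rw [cfc_sub (fun z => Complex.exp (I * z)) (fun _ => (1:ℂ)) D
        ((Complex.continuous_exp.comp (continuous_const.mul continuous_id)).continuousOn)
        continuousOn_const]
      rw [expI_cfc hD, cfc_const 1 D, map_one]
    have hcont : ContinuousOn (fun z => Complex.exp (I * z) - 1) (spectrum ℂ D) :=
      ((Complex.continuous_exp.comp (continuous_const.mul continuous_id)).sub
        continuous_const).continuousOn
    rw [e1, norm_cfc_apply_sq hDn hcont ξ]
    have hmono : cfc (fun z => ((‖Complex.exp (I * z) - 1‖^2 : ℝ) : ℂ)) D
        ≤ cfc (fun z => ((‖z‖^2 : ℝ) : ℂ)) D := by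
      apply cfc_ofReal_mono hDn
      · exact Complex.continuous_ofReal.comp_continuousOn
          ((((continuous_norm.comp ((Complex.continuous_exp.comp
            (continuous_const.mul continuous_id)).sub continuous_const)).pow 2)).continuousOn)
      · exact Complex.continuous_ofReal.comp_continuousOn
          (((continuous_norm.pow 2)).continuousOn)
      · intro z hz
        have hzre : (z.re : ℂ) = z := hD.spectrumRestricts.rightInvOn hz
        rw [← hzre]
        have := abs_exp_I_sub_one_le (t := z.re)
        have habs : ‖(z.re : ℂ)‖ = |z.re| := by rw [Complex.norm_real, Real.norm_eq_abs]
        rw [habs]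
        nlinarith [norm_nonneg (Complex.exp (I * (z.re:ℂ)) - 1), abs_nonneg z.re]
    have hfin := re_inner_le hmono ξ
    have hid : RCLike.re (inner ℂ ((cfc (fun z => ((‖z‖^2 : ℝ) : ℂ)) D) ξ) ξ : ℂ)
        = ‖D ξ‖^2 := by
      have h5 := norm_cfc_apply_sq hDn (continuousOn_id (s := spectrum ℂ D)) ξ
      rw [cfc_id ℂ D] at h5
      simp only [id_eq] at h5
      exact h5.symm
    rw [hid] at hfin
    exact hfin
  calc ‖(NormedSpace.exp (I • S) * (NormedSpace.exp (I • D) - 1)) ξ‖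
      = ‖NormedSpace.exp (I • S) ((NormedSpace.exp (I • D) - 1) ξ)‖ := rfl
    _ ≤ ‖NormedSpace.exp (I • S)‖ * ‖(NormedSpace.exp (I • D) - 1) ξ‖ :=
        ContinuousLinearMap.le_opNorm _ _
    _ ≤ 1 * ‖(NormedSpace.exp (I • D) - 1) ξ‖ := by
        apply mul_le_mul_of_nonneg_right (norm_exp_I_smul_le hS) (norm_nonneg _)
    _ = ‖(NormedSpace.exp (I • D) - 1) ξ‖ := one_mul _
    _ ≤ ‖D ξ‖ := by nlinarith [norm_nonneg ((NormedSpace.exp (I • D) - 1) ξ), norm_nonneg (D ξ)]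

end OpTools

lemma Kf_continuous (n : ℕ) : Continuous (Kf n) := continuous_stp _ _

lemma Kfc_continuous (n : ℕ) : Continuous (fun z : ℂ => ((Kf n z.re : ℝ) : ℂ)) :=
  Complex.continuous_ofReal.comp ((Kf_continuous n).comp Complex.continuous_re)

lemma abs_sin_eq {x : ℝ} (hx : |x| ≤ π) : |Real.sin x| = Real.sin |x| := by
  rcases le_or_gt 0 x with h | h
  · rw [_root_.abs_of_nonneg h, _root_.abs_of_nonneg (Real.sin_nonneg_of_nonneg_of_le_pi h
      (by rwa [_root_.abs_of_nonneg h] at hx))]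
  · have hsx : Real.sin x ≤ 0 := by
      have h1 : 0 ≤ Real.sin (-x) := Real.sin_nonneg_of_nonneg_of_le_pi (by linarith)
        (by rwa [_root_.abs_of_neg h] at hx)
      rw [Real.sin_neg] at h1
      linarith
    rw [_root_.abs_of_nonpos hsx, _root_.abs_of_neg h, Real.sin_neg]

lemma tt_tendsto : Filter.Tendsto tt Filter.atTop (nhds 0) := by
  have h1 : Filter.Tendsto (fun n : ℕ => ((4:ℝ)⁻¹) ^ n) Filter.atTop (nhds 0) :=
    tendsto_pow_atTop_nhds_zero_of_lt_one (by norm_num) (by norm_num)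
  have h2 : Filter.Tendsto (fun n : ℕ => ((4:ℝ)⁻¹) ^ (n + 2)) Filter.atTop (nhds 0) :=
    h1.comp (Filter.tendsto_add_atTop_nat 2)
  have h3 := h2.const_mul π
  rw [show tt = fun n : ℕ => π * ((4:ℝ)⁻¹)^(n+2) from rfl]
  simpa using h3

section OpTools2

variable {H : Type} [NormedAddCommGroup H] [InnerProductSpace ℂ H] [CompleteSpace H]

lemma absOp_cfc {a : H →L[ℂ] H} (ha : IsStarNormal a) {f : ℂ → ℂ}
    (hf : ContinuousOn f (spectrum ℂ a)) :
    absOp (cfc f a) = cfc (fun z => ((‖f z‖ : ℝ) : ℂ)) a := by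
  have habs : ContinuousOn (fun z => ((‖f z‖ : ℝ) : ℂ)) (spectrum ℂ a) :=
    Complex.continuous_ofReal.comp_continuousOn (continuous_norm.comp_continuousOn hf)
  have hb : (0 : H →L[ℂ] H) ≤ cfc (fun z => ((‖f z‖ : ℝ) : ℂ)) a :=
    cfc_ofReal_nonneg ha habs (fun z _ => norm_nonneg _)
  have hsq : cfc (fun z => ((‖f z‖ : ℝ) : ℂ)) a
      * cfc (fun z => ((‖f z‖ : ℝ) : ℂ)) a = star (cfc f a) * cfc f a := by
    rw [← cfc_star f a, ← cfc_mul _ _ a hf.star hf, ← cfc_mul _ _ a habs habs]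
    apply cfc_congr
    intro z hz
    show ((‖f z‖ : ℝ) : ℂ) * ((‖f z‖ : ℝ) : ℂ) = star (f z) * f z
    rw [← Complex.ofReal_mul, ← sq, Complex.sq_norm, Complex.normSq_eq_conj_mul_self]
    rfl
  exact CFC.sqrt_unique hsq hb

lemma cfc_ofReal_smul_eq {a : H →L[ℂ] H} (r : ℝ) (g : ℂ → ℝ)
    (hg : ContinuousOn (fun z => (g z : ℂ)) (spectrum ℂ a)) :
    r • cfc (fun z => (g z : ℂ)) a = cfc (fun z => ((r * g z : ℝ) : ℂ)) a := by
  have h1 : (fun z => ((r * g z : ℝ) : ℂ)) = fun z => (r : ℂ) • (g z : ℂ) := by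
    funext z; push_cast; simp [smul_eq_mul]
  rw [h1, cfc_smul (r : ℂ) _ a hg]
  rw [show ((r:ℂ)) • cfc (fun z => (g z : ℂ)) a = r • cfc (fun z => (g z : ℂ)) a by
    rw [← algebraMap_smul ℂ r (cfc (fun z => (g z : ℂ)) a)]; norm_num]

lemma re_inner_cfc_comb {a : H →L[ℂ] H} (ha : IsStarNormal a) {g₁ g₂ : ℂ → ℝ}
    (h1 : ContinuousOn (fun z => (g₁ z : ℂ)) (spectrum ℂ a))
    (h2 : ContinuousOn (fun z => (g₂ z : ℂ)) (spectrum ℂ a))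
    (r s c : ℝ) (ξ : H) :
    RCLike.re (inner ℂ (cfc (fun z => ((r * g₁ z + s * g₂ z + c : ℝ) : ℂ)) a ξ) ξ : ℂ)
      = r * RCLike.re (inner ℂ (cfc (fun z => (g₁ z : ℂ)) a ξ) ξ : ℂ)
        + s * RCLike.re (inner ℂ (cfc (fun z => (g₂ z : ℂ)) a ξ) ξ : ℂ) + c * ‖ξ‖^2 := by
  have efun : (fun z => ((r * g₁ z + s * g₂ z + c : ℝ) : ℂ))
      = fun z => ((r:ℂ) • (g₁ z : ℂ) + ((s:ℂ) • (g₂ z : ℂ) + (c : ℂ))) := by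
    funext z; push_cast; simp only [smul_eq_mul]; ring
  rw [efun]
  rw [cfc_add (a := a) (fun z => (r:ℂ) • (g₁ z : ℂ)) (fun z => (s:ℂ) • (g₂ z : ℂ) + (c : ℂ)) (h1.const_smul (r:ℂ)) ((h2.const_smul (s:ℂ)).add continuousOn_const)]
  rw [cfc_add (a := a) (fun z => (s:ℂ) • (g₂ z : ℂ)) (fun _ => (c : ℂ)) (h2.const_smul (s:ℂ)) continuousOn_const]
  rw [cfc_smul (r:ℂ) _ a h1, cfc_smul (s:ℂ) _ a h2, cfc_const (c:ℂ) a ha]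
  simp only [ContinuousLinearMap.add_apply, ContinuousLinearMap.smul_apply,
    Algebra.algebraMap_eq_smul_one, ContinuousLinearMap.smul_apply, ContinuousLinearMap.one_apply,
    inner_add_left, inner_smul_left, map_add]
  simp only [Complex.conj_ofReal]
  have hre : ∀ (t : ℝ) (w : ℂ), RCLike.re ((t:ℂ) * w) = t * RCLike.re w :=
    fun t w => Complex.re_ofReal_mul t w
  rw [hre, hre, hre, inner_self_eq_norm_sq]
  ring

lemma real_smul_mem_vN (N : VonNeumannAlgebra H) {T : H →L[ℂ] H} (hT : T ∈ N) (r : ℝ) :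
    r • T ∈ N := by
  rw [← algebraMap_smul ℂ r T]
  exact N.toStarSubalgebra.smul_mem hT _

end OpTools2

section MainConstruction

variable {H : Type} [NormedAddCommGroup H] [InnerProductSpace ℂ H] [CompleteSpace H]

open Filter

lemma exists_log [Nontrivial H] (N : VonNeumannAlgebra H)
    (u : H →L[ℂ] H) (huN : u ∈ N) (hu : star u * u = 1 ∧ u * star u = 1) :
    ∃ X : H →L[ℂ] H, IsSelfAdjoint X ∧ X ∈ N ∧ ‖X‖ ≤ π ∧
      NormedSpace.exp (I • X) = u := by
  haveI hUn : IsStarNormal u := ⟨by rw [Commute, SemiconjBy, hu.1, hu.2]⟩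
  haveI : NormOneClass (H →L[ℂ] H) := ⟨ContinuousLinearMap.norm_id⟩
  have hsp : ∀ z ∈ spectrum ℂ u, ‖z‖ = 1 := by
    intro z hz
    have h := spectrum.subset_circle_of_unitary (𝕜 := ℂ) (u := u) ⟨hu.1, hu.2⟩ hz
    simpa using mem_sphere_zero_iff_norm.mp h
  have hfc : ∀ n, ContinuousOn (fun z => ((hf n z : ℝ) : ℂ)) (spectrum ℂ u) :=
    fun n => (hf_continuousOn n).mono (fun z hz => hsp z hz)
  set Hc : ℕ → (H →L[ℂ] H) := fun n => cfc (fun z => ((hf n z : ℝ) : ℂ)) u with hHcdef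
  have hKcont : ∀ n, ContinuousOn (fun z : ℂ => ((Kf n z.re : ℝ) : ℂ)) (spectrum ℂ u) :=
    fun n => (Kfc_continuous n).continuousOn
  set aK : ℕ → H → ℝ := fun n ξ =>
    RCLike.re (inner ℂ (cfc (fun z : ℂ => ((Kf n z.re : ℝ) : ℂ)) u ξ) ξ : ℂ) with haKdef
  have haKanti : ∀ ξ, Antitone (fun n => aK n ξ) := by
    intro ξ n m hnm
    exact re_inner_le (cfc_ofReal_mono hUn (hKcont m) (hKcont n)
      (fun z _ => Kf_anti hnm z.re)) ξ
  have haK0 : ∀ n ξ, 0 ≤ aK n ξ := fun n ξ =>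
    re_inner_nonneg (cfc_ofReal_nonneg hUn (hKcont n) (fun z _ => (Kf_mem z.re).1)) ξ
  have haKlim : ∀ ξ, Tendsto (fun n => aK n ξ) atTop (nhds (⨅ n, aK n ξ)) := by
    intro ξ
    apply tendsto_atTop_ciInf (haKanti ξ)
    refine ⟨0, ?_⟩
    rintro y ⟨n, rfl⟩
    exact haK0 n ξ
  have haKinf_le : ∀ ξ n, (⨅ k, aK k ξ) ≤ aK n ξ := by
    intro ξ n
    apply ciInf_le
    refine ⟨0, ?_⟩
    rintro y ⟨k, rfl⟩
    exact haK0 k ξ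
  -- the key Cauchy-type estimate
  have hHdiff : ∀ n m, n ≤ m → ∀ ξ : H,
      ‖(Hc n - Hc m) ξ‖^2 ≤ 4 * π^2 * (aK n ξ - aK (m+2) ξ) := by
    intro n m hnm ξ
    have hcsub : ContinuousOn (fun z => ((hf n z : ℝ):ℂ) - ((hf m z : ℝ):ℂ)) (spectrum ℂ u) :=
      (hfc n).sub (hfc m)
    have e1 : Hc n - Hc m = cfc (fun z => ((hf n z : ℝ):ℂ) - ((hf m z : ℝ):ℂ)) u :=
      (cfc_sub _ _ u (hfc n) (hfc m)).symm
    rw [e1, norm_cfc_apply_sq hUn hcsub ξ]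
    have hc1 : ContinuousOn
        (fun z => ((‖((hf n z:ℝ):ℂ) - ((hf m z:ℝ):ℂ)‖^2 : ℝ):ℂ)) (spectrum ℂ u) :=
      Complex.continuous_ofReal.comp_continuousOn
        ((continuous_norm.comp_continuousOn hcsub).pow 2)
    have hc2 : ContinuousOn
        (fun z => ((4*π^2 * Kf n z.re + (-(4*π^2)) * Kf (m+2) z.re + 0 : ℝ):ℂ)) (spectrum ℂ u) :=
      (Complex.continuous_ofReal.comp (((continuous_const.mul
        ((Kf_continuous n).comp Complex.continuous_re)).add (continuous_const.mul
        ((Kf_continuous (m+2)).comp Complex.continuous_re))).add continuous_const)).continuousOn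
    have hptw : ∀ z ∈ spectrum ℂ u,
        (‖((hf n z:ℝ):ℂ) - ((hf m z:ℝ):ℂ)‖^2 : ℝ)
          ≤ 4*π^2 * Kf n z.re + (-(4*π^2)) * Kf (m+2) z.re + 0 := by
      intro z hz
      have h := hf_sub_sq_le hnm (hsp z hz)
      rw [← Complex.ofReal_sub, Complex.norm_real, Real.norm_eq_abs, _root_.sq_abs]
      ring_nf
      ring_nf at h
      linarith
    have hmono := re_inner_le (cfc_ofReal_mono hUn hc1 hc2 hptw) ξ
    rw [re_inner_cfc_comb hUn ((Kfc_continuous n).continuousOn)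
      ((Kfc_continuous (m+2)).continuousOn) (4*π^2) (-(4*π^2)) 0 ξ] at hmono
    rw [haKdef]
    ring_nf
    ring_nf at hmono
    linarith
  -- the sequence is strongly Cauchy
  have hcauchy : ∀ ξ : H, CauchySeq (fun n => Hc n ξ) := by
    intro ξ
    rw [Metric.cauchySeq_iff]
    intro ε hε
    have hπ := Real.pi_pos
    set L := ⨅ n, aK n ξ with hLdef
    have hδ : 0 < ε^2/(4*π^2+1) := by positivity
    have hev := (haKlim ξ).eventually (gt_mem_nhds (lt_add_of_pos_right L hδ))
    obtain ⟨N, hN⟩ := eventually_atTop.mp hev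
    refine ⟨N, fun m hm n hn => ?_⟩
    have key : ∀ p q, N ≤ p → p ≤ q → dist (Hc p ξ) (Hc q ξ) < ε := by
      intro p q hp hpq
      have h1 : ‖(Hc p - Hc q) ξ‖^2 ≤ 4 * π^2 * (aK p ξ - aK (q+2) ξ) := hHdiff p q hpq ξ
      have h2 : aK p ξ < L + ε^2/(4*π^2+1) := hN p hp
      have h3 : L ≤ aK (q+2) ξ := haKinf_le ξ (q+2)
      have h4 : ‖(Hc p - Hc q) ξ‖^2 < ε^2 := by
        have h5 : 4*π^2 * (aK p ξ - aK (q+2) ξ) ≤ 4*π^2 * (ε^2/(4*π^2+1)) := by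
          apply mul_le_mul_of_nonneg_left _ (by positivity)
          linarith
        have h6 : 4*π^2 * (ε^2/(4*π^2+1)) < ε^2 := by
          rw [div_eq_mul_inv]
          rw [show 4*π^2 * (ε^2 * (4*π^2+1)⁻¹) = ε^2 * ((4*π^2) * (4*π^2+1)⁻¹) by ring]
          have h7 : (4*π^2) * (4*π^2+1)⁻¹ < 1 := by
            rw [mul_inv_lt_iff₀ (by positivity)]
            linarith
          have hε2 : 0 < ε^2 := by positivity
          nlinarith [h7, hε2]
        linarith
      rw [dist_eq_norm]
      have h8 : Hc p ξ - Hc q ξ = (Hc p - Hc q) ξ := rfl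
      rw [h8]
      nlinarith [norm_nonneg ((Hc p - Hc q) ξ)]
    rcases le_total m n with h | h
    · exact key m n hm h
    · rw [dist_comm]
      exact key n m hn h
  -- construct the limit operator
  have hXex : ∀ ξ : H, ∃ η : H, Tendsto (fun n => Hc n ξ) atTop (nhds η) :=
    fun ξ => cauchySeq_tendsto_of_complete (hcauchy ξ)
  choose Xf hXf using hXex
  have hXadd : ∀ ξ ζ, Xf (ξ + ζ) = Xf ξ + Xf ζ := by
    intro ξ ζ
    have h1 := hXf (ξ + ζ)
    rw [show (fun n => Hc n (ξ + ζ)) = fun n => Hc n ξ + Hc n ζ from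
      funext fun n => map_add _ _ _] at h1
    exact tendsto_nhds_unique h1 ((hXf ξ).add (hXf ζ))
  have hXsmul : ∀ (c : ℂ) ξ, Xf (c • ξ) = c • Xf ξ := by
    intro c ξ
    have h1 := hXf (c • ξ)
    rw [show (fun n => Hc n (c • ξ)) = fun n => c • Hc n ξ from
      funext fun n => map_smul _ _ _] at h1
    exact tendsto_nhds_unique h1 ((hXf ξ).const_smul c)
  set X₀ : H →ₗ[ℂ] H :=
    { toFun := Xf, map_add' := hXadd, map_smul' := hXsmul } with hX₀def
  have hXb : ∀ ξ, ‖Xf ξ‖ ≤ π * ‖ξ‖ := by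
    intro ξ
    apply le_of_tendsto (hXf ξ).norm
    apply Filter.Eventually.of_forall
    intro n
    calc ‖Hc n ξ‖ ≤ ‖Hc n‖ * ‖ξ‖ := (Hc n).le_opNorm ξ
      _ ≤ π * ‖ξ‖ := by
          apply mul_le_mul_of_nonneg_right _ (norm_nonneg ξ)
          apply norm_cfc_le Real.pi_pos.le
          intro z _
          rw [Complex.norm_real, Real.norm_eq_abs]
          exact hf_abs_le n z
  set X : H →L[ℂ] H := X₀.mkContinuous π hXb with hXdef
  have hXtend : ∀ ξ, Tendsto (fun n => Hc n ξ) atTop (nhds (X ξ)) := fun ξ => hXf ξ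
  have hXnorm : ‖X‖ ≤ π := LinearMap.mkContinuous_norm_le X₀ Real.pi_pos.le hXb
  -- self-adjointness
  have hHsa : ∀ n, IsSelfAdjoint (Hc n) := by
    intro n
    rw [IsSelfAdjoint, ← cfc_star (fun z => ((hf n z : ℝ):ℂ)) u]
    exact cfc_congr (fun z _ => by simp [Complex.conj_ofReal])
  have hXsa : IsSelfAdjoint X := by
    have h : ∀ ξ η : H, (inner ℂ (X ξ) η : ℂ) = inner ℂ ξ (X η) := by
      intro ξ η
      have h1 : Tendsto (fun n => (inner ℂ (Hc n ξ) η : ℂ)) atTop (nhds (inner ℂ (X ξ) η)) :=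
        (hXtend ξ).inner tendsto_const_nhds
      have h2 : Tendsto (fun n => (inner ℂ ξ (Hc n η) : ℂ)) atTop (nhds (inner ℂ ξ (X η))) :=
        tendsto_const_nhds.inner (hXtend η)
      have h3 : (fun n => (inner ℂ (Hc n ξ) η : ℂ)) = fun n => (inner ℂ ξ (Hc n η) : ℂ) := by
        funext n
        rw [show Hc n η = ContinuousLinearMap.adjoint (Hc n) η by
          rw [← ContinuousLinearMap.star_eq_adjoint, (hHsa n).star_eq]]
        rw [ContinuousLinearMap.adjoint_inner_right]
      rw [h3] at h1
      exact tendsto_nhds_unique h1 h2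
    rw [IsSelfAdjoint, ContinuousLinearMap.star_eq_adjoint]
    exact ((ContinuousLinearMap.eq_adjoint_iff X X).mpr h).symm
  -- commutation
  have hHcomm : ∀ n m, Commute (Hc n) (Hc m) := by
    intro n m
    rw [Commute, SemiconjBy, ← cfc_mul _ _ u (hfc n) (hfc m), ← cfc_mul _ _ u (hfc m) (hfc n)]
    exact cfc_congr fun z _ => mul_comm _ _
  have hXcomm : ∀ m, Commute (Hc m) X := by
    intro m
    ext ξ
    show Hc m (X ξ) = X (Hc m ξ)
    have h1 : Tendsto (fun n => Hc m (Hc n ξ)) atTop (nhds (Hc m (X ξ))) :=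
      ((Hc m).continuous.tendsto _).comp (hXtend ξ)
    have h2 : Tendsto (fun n => Hc n (Hc m ξ)) atTop (nhds (X (Hc m ξ))) := hXtend _
    have h3 : (fun n => Hc n (Hc m ξ)) = fun n => Hc m (Hc n ξ) := by
      funext n
      calc Hc n (Hc m ξ) = (Hc n * Hc m) ξ := rfl
        _ = (Hc m * Hc n) ξ := by rw [hHcomm n m]
        _ = Hc m (Hc n ξ) := rfl
    rw [h3] at h2
    exact tendsto_nhds_unique h1 h2
  -- membership in the von Neumann algebra
  have hHmem : ∀ n, Hc n ∈ N := fun n => cfc_mem_vN N huN _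
  have hXmem : X ∈ N := by
    show X ∈ (N : Set (H →L[ℂ] H))
    rw [← N.centralizer_centralizer]
    rw [Set.mem_centralizer_iff]
    intro y hy
    ext ξ
    show y (X ξ) = X (y ξ)
    have hyH : ∀ n, y (Hc n ξ) = Hc n (y ξ) := by
      intro n
      have h := hy (Hc n) (hHmem n)
      calc y (Hc n ξ) = (y * Hc n) ξ := rfl
        _ = (Hc n * y) ξ := by rw [← h]
        _ = Hc n (y ξ) := rfl
    have h1 : Tendsto (fun n => y (Hc n ξ)) atTop (nhds (y (X ξ))) :=
      (y.continuous.tendsto _).comp (hXtend ξ)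
    have h2 : Tendsto (fun n => Hc n (y ξ)) atTop (nhds (X (y ξ))) := hXtend _
    rw [show (fun n => y (Hc n ξ)) = fun n => Hc n (y ξ) from funext hyH] at h1
    exact tendsto_nhds_unique h1 h2
  -- exponentials
  have hEn : ∀ n, cfc (fun z => Complex.exp (I * ((hf n z : ℝ):ℂ))) u
      = NormedSpace.exp (I • Hc n) := by
    intro n
    have h0 : (fun z => Complex.exp (I * ((hf n z : ℝ):ℂ)))
        = ((fun w => Complex.exp (I * w)) <| (fun z => ((hf n z:ℝ):ℂ)) ·) := rfl
    rw [h0, cfc_comp' (fun w => Complex.exp (I * w)) (fun z => ((hf n z:ℝ):ℂ)) u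
      ((Complex.continuous_exp.comp (continuous_const.mul continuous_id)).continuousOn) (hfc n)]
    exact expI_cfc (hHsa n)
  have hR4 : ∀ n (ξ : H), ‖(NormedSpace.exp (I • Hc n) - u) ξ‖^2
      ≤ 4 * aK n ξ + (-4) * aK (n+2) ξ + tt n^2 * ‖ξ‖^2 := by
    intro n ξ
    rw [← hEn n]
    have hecont : ContinuousOn (fun z => Complex.exp (I * ((hf n z:ℝ):ℂ))) (spectrum ℂ u) :=
      Complex.continuous_exp.comp_continuousOn (continuousOn_const.mul (hfc n))
    have e1 : cfc (fun z => Complex.exp (I * ((hf n z:ℝ):ℂ))) u - u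
        = cfc (fun z => Complex.exp (I * ((hf n z:ℝ):ℂ)) - z) u := by
      rw [cfc_sub (fun z => Complex.exp (I * ((hf n z:ℝ):ℂ))) (fun z => z) u hecont
        (continuousOn_id' _), cfc_id' ℂ u]
    rw [e1, norm_cfc_apply_sq hUn (f := fun z => Complex.exp (I * ((hf n z:ℝ):ℂ)) - z) (hecont.sub (continuousOn_id' _)) ξ]
    have hc1 : ContinuousOn
        (fun z => ((‖Complex.exp (I * ((hf n z:ℝ):ℂ)) - z‖^2 : ℝ):ℂ))
        (spectrum ℂ u) :=
      Complex.continuous_ofReal.comp_continuousOn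
        ((continuous_norm.comp_continuousOn (hecont.sub (continuousOn_id' _))).pow 2)
    have hc2 : ContinuousOn
        (fun z => ((4 * Kf n z.re + (-4) * Kf (n+2) z.re + tt n^2 : ℝ):ℂ)) (spectrum ℂ u) :=
      (Complex.continuous_ofReal.comp (((continuous_const.mul
        ((Kf_continuous n).comp Complex.continuous_re)).add (continuous_const.mul
        ((Kf_continuous (n+2)).comp Complex.continuous_re))).add continuous_const)).continuousOn
    have hptw : ∀ z ∈ spectrum ℂ u,
        (‖Complex.exp (I * ((hf n z:ℝ):ℂ)) - z‖^2 : ℝ)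
          ≤ 4 * Kf n z.re + (-4) * Kf (n+2) z.re + tt n^2 := by
      intro z hz
      have h := exp_hf_sub_sq_le n (hsp z hz)
      ring_nf
      ring_nf at h
      linarith
    have hmono := re_inner_le (cfc_ofReal_mono hUn hc1 hc2 hptw) ξ
    rw [re_inner_cfc_comb hUn ((Kfc_continuous n).continuousOn)
      ((Kfc_continuous (n+2)).continuousOn) 4 (-4) (tt n^2) ξ] at hmono
    exact hmono
  -- the limit identity  exp(iX) = u
  have hXexp : NormedSpace.exp (I • X) = u := by
    ext ξ
    have hb : ∀ n, ‖(NormedSpace.exp (I • X) - u) ξ‖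
        ≤ ‖(X - Hc n) ξ‖
          + Real.sqrt (4 * aK n ξ + (-4) * aK (n+2) ξ + tt n^2 * ‖ξ‖^2) := by
      intro n
      have h1 : (NormedSpace.exp (I • X) - u) ξ
          = (NormedSpace.exp (I • X) - NormedSpace.exp (I • Hc n)) ξ
            + (NormedSpace.exp (I • Hc n) - u) ξ := by
        simp only [ContinuousLinearMap.sub_apply]
        abel
      rw [h1]
      apply le_trans (norm_add_le _ _)
      apply add_le_add
      · exact exp_diff_apply_le hXsa (hHsa n) ((hXcomm n).symm) ξ
      · exact Real.le_sqrt_of_sq_le (hR4 n ξ)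
    have hlim1 : Tendsto (fun n => ‖(X - Hc n) ξ‖) atTop (nhds 0) := by
      have h1 := (tendsto_const_nhds (x := X ξ) (f := atTop)).sub (hXtend ξ)
      have h2 := h1.norm
      simp only [sub_self, norm_zero] at h2
      have h3 : (fun n => ‖(X - Hc n) ξ‖) = fun n => ‖X ξ - Hc n ξ‖ := by
        funext n
        rw [ContinuousLinearMap.sub_apply]
      rw [h3]
      exact h2
    have hlim2 : Tendsto
        (fun n => Real.sqrt (4 * aK n ξ + (-4) * aK (n+2) ξ + tt n^2 * ‖ξ‖^2)) atTop (nhds 0) := by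
      set L := ⨅ n, aK n ξ
      have hL := haKlim ξ
      have hL2 : Tendsto (fun n => aK (n+2) ξ) atTop (nhds L) :=
        hL.comp (tendsto_add_atTop_nat 2)
      have htt2 : Tendsto (fun n => tt n^2 * ‖ξ‖^2) atTop (nhds 0) := by
        have := (tt_tendsto.pow 2).mul_const (‖ξ‖^2)
        simpa using this
      have hin : Tendsto (fun n => 4 * aK n ξ + (-4) * aK (n+2) ξ + tt n^2 * ‖ξ‖^2)
          atTop (nhds (4 * L + (-4) * L + 0)) :=
        ((hL.const_mul 4).add (hL2.const_mul (-4))).add htt2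
      rw [show 4 * L + (-4) * L + 0 = 0 by ring] at hin
      have h3 := (Real.continuous_sqrt.tendsto 0).comp hin
      simp only [Real.sqrt_zero] at h3
      exact h3
    have hfinal : ‖(NormedSpace.exp (I • X) - u) ξ‖ ≤ 0 := by
      have hsum := hlim1.add hlim2
      rw [add_zero] at hsum
      exact ge_of_tendsto hsum (Filter.Eventually.of_forall hb)
    have h0 : (NormedSpace.exp (I • X) - u) ξ = 0 :=
      norm_eq_zero.mp (le_antisymm hfinal (norm_nonneg _))
    simpa [ContinuousLinearMap.sub_apply, sub_eq_zero] using h0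
  exact ⟨X, hXsa, hXmem, hXnorm, hXexp⟩

end MainConstruction

lemma abs_exp_I_sub_exp_I_le (a b : ℝ) :
    ‖Complex.exp (I * a) - Complex.exp (I * b)‖ ≤ |a - b| := by
  rw [abs_exp_I_sub_exp_I]
  have h := Real.abs_sin_le_abs (x := (a - b)/2)
  rw [abs_div] at h
  norm_num at h
  linarith

section FinalProof

variable {H : Type} [NormedAddCommGroup H] [InnerProductSpace ℂ H] [CompleteSpace H]

theorem unitary_group_L1_path_connected' (N : VonNeumannAlgebra H)
    (τ : (H →L[ℂ] H) → ℝ≥0∞) (hτ : IsFNSTrace N τ)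
    (u : H →L[ℂ] H) (huN : u ∈ N) (hu : star u * u = 1 ∧ u * star u = 1)
    (hu1 : MemL1 N τ (u - 1)) :
    ∃ x : H →L[ℂ] H, IsSelfAdjoint x ∧ MemL1 N τ x ∧ ‖x‖ ≤ Real.pi ∧
      u = cfc (fun z : ℂ => Complex.exp (Complex.I * z)) x ∧
      (let γ : ℝ → (H →L[ℂ] H) := fun t => cfc (fun z : ℂ => Complex.exp (Complex.I * t * z)) x
       γ 0 = 1 ∧ γ 1 = u ∧
       (∀ t : ℝ, (star (γ t) * γ t = 1 ∧ γ t * star (γ t) = 1) ∧ MemL1 N τ (γ t - 1)) ∧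
       (∀ t : ℝ, ∀ ε > (0:ℝ), ∃ δ > (0:ℝ), ∀ s : ℝ, |s - t| < δ →
          normL1 τ (γ s - γ t) < ε)) := by
  rcases subsingleton_or_nontrivial H with hH | hH
  · -- degenerate case
    haveI : Subsingleton (H →L[ℂ] H) :=
      ⟨fun a b => ContinuousLinearMap.ext fun ξ => Subsingleton.elim _ _⟩
    have hz : ∀ y : H →L[ℂ] H, y = 0 := fun y => Subsingleton.elim y 0
    have hτabs : ∀ y : H →L[ℂ] H, τ (absOp y) < ∞ := by
      intro y
      rw [hz (absOp y), hτ.map_zero]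
      exact ENNReal.zero_lt_top
    have hmem : ∀ y : H →L[ℂ] H, y ∈ N := fun y => by
      rw [hz y]; exact zero_mem N.toStarSubalgebra
    have hL1 : ∀ y : H →L[ℂ] H, MemL1 N τ y := fun y => ⟨hmem y, hτabs y⟩
    refine ⟨0, star_zero _, hL1 0, by rw [norm_zero]; exact Real.pi_pos.le,
      Subsingleton.elim _ _, Subsingleton.elim _ _, Subsingleton.elim _ _,
      fun t => ⟨⟨Subsingleton.elim _ _, Subsingleton.elim _ _⟩, hL1 _⟩,
      fun t ε hε => ⟨1, one_pos, fun s _ => ?_⟩⟩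
    have h0 : ∀ y : H →L[ℂ] H, normL1 τ y < ε := by
      intro y
      rw [hz y, normL1, hz (absOp 0), hτ.map_zero]
      simpa using hε
    exact h0 _
  · -- main case
    haveI : NormOneClass (H →L[ℂ] H) := ⟨ContinuousLinearMap.norm_id⟩
    obtain ⟨X, hXsa, hXmem, hXnorm, hXexp⟩ := exists_log N u huN hu
    haveI hXn : IsStarNormal X := hXsa.isStarNormal
    have hmain : u = cfc (fun z : ℂ => Complex.exp (Complex.I * z)) X := by
      rw [expI_cfc hXsa, hXexp]
    have hspX : ∀ z ∈ spectrum ℂ X, ((z.re : ℝ) : ℂ) = z ∧ |z.re| ≤ π := by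
      intro z hz
      have h1 : ((z.re : ℝ) : ℂ) = z := hXsa.spectrumRestricts.rightInvOn hz
      refine ⟨h1, ?_⟩
      have h2 : ‖z‖ ≤ ‖X‖ := spectrum.norm_le_norm_of_mem hz
      have h3 : |z.re| ≤ ‖z‖ := by
        exact Complex.abs_re_le_norm z
      linarith
    -- continuity facts
    have hec : ContinuousOn (fun z : ℂ => Complex.exp (Complex.I * z)) (spectrum ℂ X) :=
      (Complex.continuous_exp.comp (continuous_const.mul continuous_id)).continuousOn
    have hect : ∀ t : ℝ, ContinuousOn (fun z : ℂ => Complex.exp (Complex.I * (t:ℂ) * z))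
        (spectrum ℂ X) :=
      fun t => (Complex.continuous_exp.comp (continuous_const.mul continuous_id)).continuousOn
    have habsc : ContinuousOn (fun z : ℂ => ((‖z‖ : ℝ) : ℂ)) (spectrum ℂ X) :=
      (Complex.continuous_ofReal.comp continuous_norm).continuousOn
    have habsec : ContinuousOn
        (fun z : ℂ => ((‖Complex.exp (Complex.I * z) - 1‖ : ℝ) : ℂ))
        (spectrum ℂ X) :=
      (Complex.continuous_ofReal.comp (continuous_norm.comp
        ((Complex.continuous_exp.comp (continuous_const.mul continuous_id)).sub
          continuous_const))).continuousOn
    have habset : ∀ t : ℝ, ContinuousOn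
        (fun z : ℂ => ((‖Complex.exp (Complex.I * (t:ℂ) * z) - 1‖ : ℝ) : ℂ))
        (spectrum ℂ X) :=
      fun t => (Complex.continuous_ofReal.comp (continuous_norm.comp
        ((Complex.continuous_exp.comp (continuous_const.mul continuous_id)).sub
          continuous_const))).continuousOn
    have habsst : ∀ s t : ℝ, ContinuousOn
        (fun z : ℂ => ((‖Complex.exp (Complex.I * (s:ℂ) * z)
          - Complex.exp (Complex.I * (t:ℂ) * z)‖ : ℝ) : ℂ)) (spectrum ℂ X) :=
      fun s t => (Complex.continuous_ofReal.comp (continuous_norm.comp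
        ((Complex.continuous_exp.comp (continuous_const.mul continuous_id)).sub
          (Complex.continuous_exp.comp (continuous_const.mul continuous_id))))).continuousOn
    -- the τ comparison tool
    have hτkey : ∀ (g h : ℂ → ℝ) (r : ℝ), 0 ≤ r →
        ContinuousOn (fun z : ℂ => ((g z : ℝ) : ℂ)) (spectrum ℂ X) →
        ContinuousOn (fun z : ℂ => ((h z : ℝ) : ℂ)) (spectrum ℂ X) →
        (∀ z ∈ spectrum ℂ X, 0 ≤ g z) →
        (∀ z ∈ spectrum ℂ X, 0 ≤ h z) →
        (∀ z ∈ spectrum ℂ X, g z ≤ r * h z) →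
        τ (cfc (fun z => ((g z : ℝ) : ℂ)) X)
          ≤ (Real.toNNReal r : ℝ≥0∞) * τ (cfc (fun z => ((h z : ℝ) : ℂ)) X) := by
      intro g h r hr hgc hhc hg0 hh0 hgh
      have hmemg : cfc (fun z => ((g z : ℝ) : ℂ)) X ∈ N := cfc_mem_vN N hXmem _
      have hmemh : cfc (fun z => ((h z : ℝ) : ℂ)) X ∈ N := cfc_mem_vN N hXmem _
      have hsm : (Real.toNNReal r) • cfc (fun z => ((h z : ℝ) : ℂ)) X
          = cfc (fun z => ((r * h z : ℝ) : ℂ)) X := by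
        rw [NNReal.smul_def, Real.coe_toNNReal r hr, cfc_ofReal_smul_eq r h hhc]
      have hrc : ContinuousOn (fun z : ℂ => ((r * h z : ℝ) : ℂ)) (spectrum ℂ X) := by
        have he : (fun z : ℂ => ((r * h z : ℝ) : ℂ)) = fun z => (r : ℂ) * ((h z : ℝ) : ℂ) := by
          funext z; push_cast; ring
        rw [he]
        exact continuousOn_const.mul hhc
      have hle : cfc (fun z => ((g z : ℝ) : ℂ)) X
          ≤ (Real.toNNReal r) • cfc (fun z => ((h z : ℝ) : ℂ)) X := by
        rw [hsm]
        exact cfc_ofReal_mono hXn hgc hrc hgh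
      have h0g : 0 ≤ cfc (fun z => ((g z : ℝ) : ℂ)) X := cfc_ofReal_nonneg hXn hgc hg0
      have hmem2 : (Real.toNNReal r) • cfc (fun z => ((h z : ℝ) : ℂ)) X ∈ N := by
        rw [NNReal.smul_def]
        exact real_smul_mem_vN N hmemh _
      calc τ (cfc (fun z => ((g z : ℝ) : ℂ)) X)
          ≤ τ ((Real.toNNReal r) • cfc (fun z => ((h z : ℝ) : ℂ)) X) :=
            hτ.monotone _ _ hmemg hmem2 h0g hle
        _ = (Real.toNNReal r : ℝ≥0∞) * τ (cfc (fun z => ((h z : ℝ) : ℂ)) X) :=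
            hτ.homogeneous _ _ hmemh (cfc_ofReal_nonneg hXn hhc hh0)
    -- absOp computations
    have hXabs : absOp X = cfc (fun z => ((‖z‖ : ℝ) : ℂ)) X := by
      have h0 : absOp X = absOp (cfc (fun z : ℂ => z) X) := by rw [cfc_id' ℂ X]
      rw [h0, absOp_cfc hXn (continuousOn_id' _)]
    have hUabs : absOp (u - 1)
        = cfc (fun z => ((‖Complex.exp (Complex.I * z) - 1‖ : ℝ) : ℂ)) X := by
      have e1 : u - 1 = cfc (fun z => Complex.exp (Complex.I * z) - 1) X := by
        rw [cfc_sub _ _ X hec continuousOn_const, cfc_const 1 X hXn, map_one, ← hmain]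
      rw [e1, absOp_cfc hXn (f := fun z => Complex.exp (Complex.I * z) - 1) (hec.sub continuousOn_const)]
    -- MemL1 X
    have hτX : τ (absOp X) < ∞ := by
      have hkey := hτkey (fun z => ‖z‖)
        (fun z => ‖Complex.exp (Complex.I * z) - 1‖) (π/2)
        (by positivity) habsc habsec
        (fun z _ => norm_nonneg z)
        (fun z _ => norm_nonneg _)
        ?_
      · rw [hXabs]
        refine lt_of_le_of_lt hkey ?_
        rw [← hUabs]
        exact ENNReal.mul_lt_top ENNReal.coe_lt_top hu1.2
      · intro z hz
        obtain ⟨hre, hb⟩ := hspX z hz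
        rw [← hre]
        set s := z.re
        show ‖((s : ℝ) : ℂ)‖
          ≤ π / 2 * ‖Complex.exp (Complex.I * ((s:ℝ):ℂ)) - 1‖
        rw [Complex.norm_real, Real.norm_eq_abs, abs_exp_I_sub_one]
        have h1 : 2/π * (|s|/2) ≤ Real.sin (|s|/2) :=
          Real.mul_le_sin (by positivity) (by linarith)
        have h2 : Real.sin (|s|/2) = |Real.sin (s/2)| := by
          rw [show |s|/2 = |s/2| by rw [abs_div]; norm_num]
          exact (abs_sin_eq (by rw [abs_div]; norm_num; linarith [Real.pi_pos])).symm
        have hπ := Real.pi_pos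
        rw [h2] at h1
        have h3 : |s| ≤ π * |Real.sin (s/2)| := by
          have h4 : 2/π * (|s|/2) = |s|/π := by field_simp
          rw [h4] at h1
          rw [div_le_iff₀ hπ] at h1
          linarith [h1]
        nlinarith [abs_nonneg (Real.sin (s/2))]
    -- γ properties
    have hγstar : ∀ t : ℝ,
        star (cfc (fun z : ℂ => Complex.exp (Complex.I * (t:ℂ) * z)) X)
          * cfc (fun z : ℂ => Complex.exp (Complex.I * (t:ℂ) * z)) X = 1 ∧
        cfc (fun z : ℂ => Complex.exp (Complex.I * (t:ℂ) * z)) X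
          * star (cfc (fun z : ℂ => Complex.exp (Complex.I * (t:ℂ) * z)) X) = 1 := by
      intro t
      have hnsq : ∀ z ∈ spectrum ℂ X,
          Complex.normSq (Complex.exp (Complex.I * (t:ℂ) * z)) = 1 := by
        intro z hz
        obtain ⟨hre, _⟩ := hspX z hz
        rw [← hre]
        rw [show Complex.I * (t:ℂ) * ((z.re : ℝ) : ℂ) = Complex.I * ((t * z.re : ℝ) : ℂ) by
          push_cast; ring]
        have := abs_exp_I_mul_real (t * z.re)
        rw [← Complex.sq_norm, this]
        norm_num
      constructor
      · rw [← cfc_star _ X, ← cfc_mul _ _ X ((hect t).star) (hect t)]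
        have he : cfc (fun z => star (Complex.exp (Complex.I * (t:ℂ) * z))
            * Complex.exp (Complex.I * (t:ℂ) * z)) X = cfc (fun _ : ℂ => (1:ℂ)) X := by
          apply cfc_congr
          intro z hz
          show star (Complex.exp (Complex.I * (t:ℂ) * z)) * Complex.exp (Complex.I * (t:ℂ) * z)
            = 1
          rw [Complex.star_def, ← Complex.normSq_eq_conj_mul_self, hnsq z hz]
          norm_num
        rw [he, cfc_const 1 X hXn, map_one]
      · rw [← cfc_star _ X, ← cfc_mul _ _ X (hect t) ((hect t).star)]
        have he : cfc (fun z => Complex.exp (Complex.I * (t:ℂ) * z)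
            * star (Complex.exp (Complex.I * (t:ℂ) * z))) X = cfc (fun _ : ℂ => (1:ℂ)) X := by
          apply cfc_congr
          intro z hz
          show Complex.exp (Complex.I * (t:ℂ) * z) * star (Complex.exp (Complex.I * (t:ℂ) * z))
            = 1
          rw [Complex.star_def, Complex.mul_conj, hnsq z hz]
          norm_num
        rw [he, cfc_const 1 X hXn, map_one]
    have hγabs : ∀ t : ℝ,
        absOp (cfc (fun z : ℂ => Complex.exp (Complex.I * (t:ℂ) * z)) X - 1)
          = cfc (fun z => ((‖Complex.exp (Complex.I * (t:ℂ) * z) - 1‖ : ℝ) : ℂ)) X := by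
      intro t
      have e1 : cfc (fun z : ℂ => Complex.exp (Complex.I * (t:ℂ) * z)) X - 1
          = cfc (fun z => Complex.exp (Complex.I * (t:ℂ) * z) - 1) X := by
        rw [cfc_sub _ _ X (hect t) continuousOn_const, cfc_const 1 X hXn, map_one]
      rw [e1, absOp_cfc hXn (f := fun z => Complex.exp (Complex.I * (t:ℂ) * z) - 1) ((hect t).sub continuousOn_const)]
    have hγptw : ∀ (t : ℝ) (z : ℂ), z ∈ spectrum ℂ X →
        ‖Complex.exp (Complex.I * (t:ℂ) * z) - 1‖ ≤ |t| * ‖z‖ := by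
      intro t z hz
      obtain ⟨hre, _⟩ := hspX z hz
      rw [← hre]
      set s := z.re
      rw [show Complex.I * (t:ℂ) * ((s : ℝ) : ℂ) = Complex.I * ((t * s : ℝ) : ℂ) by
        push_cast; ring]
      calc ‖Complex.exp (Complex.I * ((t * s : ℝ) : ℂ)) - 1‖ ≤ |t * s| :=
            abs_exp_I_sub_one_le
        _ = |t| * ‖((s:ℝ):ℂ)‖ := by rw [abs_mul, Complex.norm_real, Real.norm_eq_abs]
    have hγτ : ∀ t : ℝ,
        τ (absOp (cfc (fun z : ℂ => Complex.exp (Complex.I * (t:ℂ) * z)) X - 1))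
          ≤ (Real.toNNReal |t| : ℝ≥0∞) * τ (absOp X) := by
      intro t
      rw [hγabs t, hXabs]
      exact hτkey _ _ |t| (abs_nonneg t) (habset t) habsc
        (fun z _ => norm_nonneg _) (fun z _ => norm_nonneg _)
        (fun z hz => hγptw t z hz)
    have hγmem : ∀ t : ℝ,
        MemL1 N τ (cfc (fun z : ℂ => Complex.exp (Complex.I * (t:ℂ) * z)) X - 1) := by
      intro t
      constructor
      · exact sub_mem (cfc_mem_vN N hXmem _) (one_mem N.toStarSubalgebra)
      · exact lt_of_le_of_lt (hγτ t) (ENNReal.mul_lt_top ENNReal.coe_lt_top hτX)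
    -- assemble
    refine ⟨X, hXsa, ⟨hXmem, hτX⟩, hXnorm, hmain, ?_, ?_, ?_, ?_⟩
    · -- γ 0 = 1
      show cfc (fun z : ℂ => Complex.exp (Complex.I * ((0:ℝ):ℂ) * z)) X = 1
      have he : cfc (fun z : ℂ => Complex.exp (Complex.I * ((0:ℝ):ℂ) * z)) X
          = cfc (fun _ : ℂ => (1:ℂ)) X := by
        apply cfc_congr
        intro z _
        norm_num
      rw [he, cfc_const 1 X hXn, map_one]
    · -- γ 1 = u
      show cfc (fun z : ℂ => Complex.exp (Complex.I * ((1:ℝ):ℂ) * z)) X = u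
      rw [hmain]
      apply cfc_congr
      intro z _
      norm_num
    · -- unitarity and MemL1
      intro t
      exact ⟨hγstar t, hγmem t⟩
    · -- norm continuity
      intro t ε hε
      set M := (τ (absOp X)).toReal with hMdef
      have hM0 : 0 ≤ M := ENNReal.toReal_nonneg
      have hπ := Real.pi_pos
      refine ⟨ε / (π + M + 1), by positivity, fun s hst => ?_⟩
      have hdiff : cfc (fun z : ℂ => Complex.exp (Complex.I * (s:ℂ) * z)) X
            - cfc (fun z : ℂ => Complex.exp (Complex.I * (t:ℂ) * z)) X
          = cfc (fun z => Complex.exp (Complex.I * (s:ℂ) * z)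
            - Complex.exp (Complex.I * (t:ℂ) * z)) X :=
        (cfc_sub _ _ X (hect s) (hect t)).symm
      have hptw2 : ∀ z ∈ spectrum ℂ X,
          ‖Complex.exp (Complex.I * (s:ℂ) * z)
            - Complex.exp (Complex.I * (t:ℂ) * z)‖ ≤ |s - t| * ‖z‖ := by
        intro z hz
        obtain ⟨hre, _⟩ := hspX z hz
        rw [← hre]
        set c := z.re
        rw [show Complex.I * (s:ℂ) * ((c : ℝ) : ℂ) = Complex.I * ((s * c : ℝ) : ℂ) by
          push_cast; ring]
        rw [show Complex.I * (t:ℂ) * ((c : ℝ) : ℂ) = Complex.I * ((t * c : ℝ) : ℂ) by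
          push_cast; ring]
        calc ‖Complex.exp (Complex.I * ((s * c : ℝ) : ℂ))
              - Complex.exp (Complex.I * ((t * c : ℝ) : ℂ))‖ ≤ |s * c - t * c| :=
              abs_exp_I_sub_exp_I_le (s * c) (t * c)
          _ = |s - t| * ‖((c:ℝ):ℂ)‖ := by
              rw [show s * c - t * c = (s - t) * c by ring, abs_mul, Complex.norm_real, Real.norm_eq_abs]
      -- operator norm part
      have hnorm : ‖cfc (fun z : ℂ => Complex.exp (Complex.I * (s:ℂ) * z)) X
          - cfc (fun z : ℂ => Complex.exp (Complex.I * (t:ℂ) * z)) X‖ ≤ |s - t| * π := by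
        rw [hdiff]
        apply norm_cfc_le (by positivity)
        intro z hz
        obtain ⟨_, hb⟩ := hspX z hz
        have h1 := hptw2 z hz
        have h2 : ‖z‖ ≤ π := by
          obtain ⟨hre, hb2⟩ := hspX z hz
          rw [← hre, Complex.norm_real, Real.norm_eq_abs]
          exact hb2
        calc ‖Complex.exp (Complex.I * (s:ℂ) * z)
              - Complex.exp (Complex.I * (t:ℂ) * z)‖ ≤ |s - t| * ‖z‖ := h1
          _ ≤ |s - t| * π := mul_le_mul_of_nonneg_left h2 (abs_nonneg _)
      -- trace part
      have habsDiff : absOp (cfc (fun z : ℂ => Complex.exp (Complex.I * (s:ℂ) * z)) X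
            - cfc (fun z : ℂ => Complex.exp (Complex.I * (t:ℂ) * z)) X)
          = cfc (fun z => ((‖Complex.exp (Complex.I * (s:ℂ) * z)
            - Complex.exp (Complex.I * (t:ℂ) * z)‖ : ℝ) : ℂ)) X := by
        rw [hdiff, absOp_cfc hXn (f := fun z => Complex.exp (Complex.I * (s:ℂ) * z) - Complex.exp (Complex.I * (t:ℂ) * z)) ((hect s).sub (hect t))]
      have hτd : τ (absOp (cfc (fun z : ℂ => Complex.exp (Complex.I * (s:ℂ) * z)) X
            - cfc (fun z : ℂ => Complex.exp (Complex.I * (t:ℂ) * z)) X))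
          ≤ (Real.toNNReal |s - t| : ℝ≥0∞) * τ (absOp X) := by
        rw [habsDiff, hXabs]
        exact hτkey _ _ |s - t| (abs_nonneg _) (habsst s t) habsc
          (fun z _ => norm_nonneg _) (fun z _ => norm_nonneg _) hptw2
      have hne : (Real.toNNReal |s - t| : ℝ≥0∞) * τ (absOp X) ≠ ⊤ :=
        (ENNReal.mul_lt_top ENNReal.coe_lt_top hτX).ne
      have hτd2 : (τ (absOp (cfc (fun z : ℂ => Complex.exp (Complex.I * (s:ℂ) * z)) X
            - cfc (fun z : ℂ => Complex.exp (Complex.I * (t:ℂ) * z)) X))).toReal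
          ≤ |s - t| * M := by
        have h1 := ENNReal.toReal_mono hne hτd
        rw [ENNReal.toReal_mul, ENNReal.coe_toReal, Real.coe_toNNReal _ (abs_nonneg _)] at h1
        exact h1
      have htotal : normL1 τ (cfc (fun z : ℂ => Complex.exp (Complex.I * (s:ℂ) * z)) X
            - cfc (fun z : ℂ => Complex.exp (Complex.I * (t:ℂ) * z)) X)
          ≤ |s - t| * (π + M) := by
        rw [normL1]
        calc _ ≤ |s - t| * π + |s - t| * M := add_le_add hnorm hτd2
          _ = |s - t| * (π + M) := by ring
      refine lt_of_le_of_lt htotal ?_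
      have h3 : |s - t| * (π + M + 1) < ε := by
        have h4 : |s - t| * (π + M + 1) < (ε / (π + M + 1)) * (π + M + 1) :=
          mul_lt_mul_of_pos_right hst (by positivity)
        rwa [div_mul_cancel₀ _ (by positivity : (π + M + 1) ≠ 0)] at h4
      nlinarith [abs_nonneg (s - t)]

end FinalProof

end

/-- For a unitary `u ∈ N` with `u - 1 ∈ L¹_τ(N)` there is a self-adjoint
`x ∈ L¹_τ(N)` with `‖x‖ ≤ π` and `u = e^{ix}`, and `t ↦ e^{itx}` is a path from `1` to
`u` which is continuous for the norm `‖·‖_{1,∞}`.  In particular the unitary group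
`U₁(L¹_τ(N)) = {u unitary : u - 1 ∈ L¹_τ(N)}` is path connected in the
`‖·‖_{1,∞}`-topology. -/
theorem unitary_group_L1_path_connected (N : VonNeumannAlgebra H)
    (τ : (H →L[ℂ] H) → ℝ≥0∞) (hτ : IsFNSTrace N τ)
    (u : H →L[ℂ] H) (huN : u ∈ N) (hu : star u * u = 1 ∧ u * star u = 1)
    (hu1 : MemL1 N τ (u - 1)) :
    ∃ x : H →L[ℂ] H, IsSelfAdjoint x ∧ MemL1 N τ x ∧ ‖x‖ ≤ Real.pi ∧
      u = cfc (fun z : ℂ => Complex.exp (Complex.I * z)) x ∧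
      (let γ : ℝ → (H →L[ℂ] H) := fun t => cfc (fun z : ℂ => Complex.exp (Complex.I * t * z)) x
       γ 0 = 1 ∧ γ 1 = u ∧
       (∀ t : ℝ, (star (γ t) * γ t = 1 ∧ γ t * star (γ t) = 1) ∧ MemL1 N τ (γ t - 1)) ∧
       (∀ t : ℝ, ∀ ε > (0:ℝ), ∃ δ > (0:ℝ), ∀ s : ℝ, |s - t| < δ →
          normL1 τ (γ s - γ t) < ε)) := by
  exact unitary_group_L1_path_connected' N τ hτ u huN hu hu1
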